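/- arXiv:2310.13657 — 2 statements merged into one kernel-verified Lean document; each statement's English description precedes it below -/
import Mathlib

section
/- There exists a constant c > 0 such that for all t ≥ 1 and all β ∈ ℝ, ∫_0^∞ e^{−√3·t·v²}·|v − β|^{−1/2} dv ≤ c·t^{−1/4}. -/
open MeasureTheory Real

lemma abs_rpow_neg_half (x : ℝ) :
    |x| ^ (-(1/2 : ℝ)) = x ^ (-(1/2 : ℝ)) + (-x) ^ (-(1/2 : ℝ)) := by
  have hc : Real.cos (-(1/2 : ℝ) * π) = 0 := by
    rw [show -(1/2 : ℝ) * π = -(π/2) by ring, Real.cos_neg, Real.cos_pi_div_two]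
  rcases lt_trichotomy x 0 with h | h | h
  · rw [Real.rpow_def_of_neg h, hc, mul_zero, abs_of_neg h, zero_add]
  · simp [h, Real.zero_rpow (by norm_num : (-(1/2:ℝ)) ≠ 0)]
  · rw [Real.rpow_def_of_neg (by linarith : -x < 0), hc, mul_zero, abs_of_pos h, add_zero]

lemma II_abs_rpow (a b : ℝ) :
    IntervalIntegrable (fun x => |x| ^ (-(1/2 : ℝ))) volume a b := by
  have h1 : IntervalIntegrable (fun x : ℝ => x ^ (-(1/2 : ℝ))) volume a b :=
    intervalIntegral.intervalIntegrable_rpow' (by norm_num)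
  have h2 : IntervalIntegrable (fun x : ℝ => (-x) ^ (-(1/2 : ℝ))) volume a b := by
    have := (intervalIntegral.intervalIntegrable_rpow' (r := -(1/2:ℝ)) (by norm_num)
      (a := -a) (b := -b))
    simpa using ((IntervalIntegrable.iff_comp_neg (by simp)).mp this)
  have he : (fun x : ℝ => |x| ^ (-(1/2 : ℝ))) =
      fun x => x ^ (-(1/2 : ℝ)) + (-x) ^ (-(1/2 : ℝ)) := funext abs_rpow_neg_half
  rw [he]; exact h1.add h2

lemma int_abs_rpow (δ : ℝ) (hδ : 0 ≤ δ) :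
    ∫ x in (-δ)..δ, |x| ^ (-(1/2 : ℝ)) = 4 * δ ^ ((1/2 : ℝ)) := by
  have hneg : (-δ) ^ ((1:ℝ)/2) = 0 := by
    rcases eq_or_lt_of_le hδ with h | h
    · rw [← h]; simp [Real.zero_rpow (by norm_num : ((1:ℝ)/2) ≠ 0)]
    · rw [Real.rpow_def_of_neg (by linarith : -δ < 0),
        show ((1:ℝ)/2) * π = π/2 by ring, Real.cos_pi_div_two, mul_zero]
  have h1 : IntervalIntegrable (fun x : ℝ => x ^ (-(1/2 : ℝ))) volume (-δ) δ :=
    intervalIntegral.intervalIntegrable_rpow' (by norm_num)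
  have h2 : IntervalIntegrable (fun x : ℝ => (-x) ^ (-(1/2 : ℝ))) volume (-δ) δ := by
    have := (intervalIntegral.intervalIntegrable_rpow' (r := -(1/2:ℝ)) (by norm_num)
      (a := δ) (b := -δ))
    simpa using ((IntervalIntegrable.iff_comp_neg (by simp)).mp this)
  have he : (fun x : ℝ => |x| ^ (-(1/2 : ℝ))) =
      fun x => x ^ (-(1/2 : ℝ)) + (-x) ^ (-(1/2 : ℝ)) := funext abs_rpow_neg_half
  have hx : ∫ x in (-δ)..δ, x ^ (-(1/2:ℝ)) = 2 * δ ^ ((1:ℝ)/2) := by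
    rw [integral_rpow (Or.inl (by norm_num))]
    norm_num [hneg]
    ring
  have hy : ∫ x in (-δ)..δ, (-x) ^ (-(1/2:ℝ)) = 2 * δ ^ ((1:ℝ)/2) := by
    rw [show (∫ x in (-δ)..δ, (-x) ^ (-(1/2:ℝ)))
        = ∫ x in (-δ)..(-(-δ)), (fun y : ℝ => y ^ (-(1/2:ℝ))) (-x) by norm_num,
      intervalIntegral.integral_comp_neg (fun y : ℝ => y ^ (-(1/2:ℝ)))]
    rw [neg_neg] at *
    rw [integral_rpow (Or.inl (by norm_num))]
    norm_num [hneg]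
    ring
  rw [he, intervalIntegral.integral_add h1 h2, hx, hy]
  norm_num
  ring

set_option maxHeartbeats 4000000 in

/-- uniform bound ∫₀^∞ e^{−√3 t v²}|v−β|^{−1/2} dv ≤ c t^{−1/4}. -/
theorem ov_gaussian_singular_integral :
    ∃ c : ℝ, 0 < c ∧ ∀ t : ℝ, 1 ≤ t → ∀ β : ℝ,
      (∫ v in Set.Ioi (0 : ℝ),
          Real.exp (-(Real.sqrt 3) * t * v ^ 2) * |v - β| ^ (-(1 / 2 : ℝ)))
        ≤ c * t ^ (-(1 / 4 : ℝ)) := by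
  refine ⟨4 + Real.sqrt π, by positivity, fun t ht β => ?_⟩
  have ht0 : (0:ℝ) < t := by linarith
  set δ : ℝ := t ^ (-(1/2 : ℝ)) with hδdef
  have hδpos : 0 < δ := Real.rpow_pos_of_pos ht0 _
  have ha : 0 < Real.sqrt 3 * t := mul_pos (Real.sqrt_pos.2 (by norm_num)) ht0
  have hδinv : δ ^ (-(1/2:ℝ)) = t ^ ((1/4:ℝ)) := by
    rw [hδdef, ← Real.rpow_mul ht0.le]; norm_num
  have hδhalf : δ ^ ((1/2:ℝ)) = t ^ (-(1/4:ℝ)) := by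
    rw [hδdef, ← Real.rpow_mul ht0.le]; norm_num
  set g1 : ℝ → ℝ := Set.indicator (Set.Icc (β - δ) (β + δ)) (fun v => |v - β| ^ (-(1/2:ℝ)))
    with hg1def
  set g2 : ℝ → ℝ := fun v => t ^ ((1/4:ℝ)) * Real.exp (-(Real.sqrt 3) * t * v ^ 2) with hg2def
  -- pointwise bound
  have key : ∀ v : ℝ, Real.exp (-(Real.sqrt 3) * t * v ^ 2) * |v - β| ^ (-(1/2:ℝ))
      ≤ g1 v + g2 v := by
    intro v
    by_cases hv : v ∈ Set.Icc (β - δ) (β + δ)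
    · have h1 : Real.exp (-(Real.sqrt 3) * t * v ^ 2) ≤ 1 := by
        apply Real.exp_le_one_iff.mpr; nlinarith [Real.sqrt_nonneg 3, sq_nonneg v]
      have h2 : (0:ℝ) ≤ |v - β| ^ (-(1/2:ℝ)) := Real.rpow_nonneg (abs_nonneg _) _
      have h3 : (0:ℝ) ≤ g2 v := by
        apply mul_nonneg (Real.rpow_nonneg ht0.le _) (Real.exp_pos _).le
      rw [hg1def, Set.indicator_of_mem hv]
      nlinarith
    · have hd : δ ≤ |v - β| := by
        simp only [Set.mem_Icc, not_and_or, not_le] at hv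
        rcases hv with h | h
        · rw [le_abs]; right; linarith
        · rw [le_abs]; left; linarith
      have h1 : |v - β| ^ (-(1/2:ℝ)) ≤ t ^ ((1/4:ℝ)) := by
        rw [← hδinv]
        exact Real.rpow_le_rpow_of_nonpos hδpos hd (by norm_num)
      rw [hg1def, Set.indicator_of_notMem hv]
      calc Real.exp (-(Real.sqrt 3) * t * v ^ 2) * |v - β| ^ (-(1/2:ℝ))
          ≤ Real.exp (-(Real.sqrt 3) * t * v ^ 2) * t ^ ((1/4:ℝ)) :=
            mul_le_mul_of_nonneg_left h1 (Real.exp_pos _).le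
        _ = g2 v := by rw [hg2def]; ring
        _ ≤ 0 + g2 v := by simp
  -- integrabilities
  have hIg1 : Integrable g1 := by
    rw [hg1def, integrable_indicator_iff measurableSet_Icc]
    have := ((II_abs_rpow (-δ) δ).comp_sub_right β)
    rw [show -δ + β = β - δ by ring, show δ + β = β + δ by ring] at this
    exact (intervalIntegrable_iff_integrableOn_Icc_of_le (by linarith)).mp this
  have hIg2 : Integrable g2 := by
    have h := (integrable_exp_neg_mul_sq ha).const_mul (t ^ ((1/4:ℝ)))
    simpa [hg2def, neg_mul, mul_assoc] using h
  have hmeas : AEStronglyMeasurable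
      (fun v => Real.exp (-(Real.sqrt 3) * t * v ^ 2) * |v - β| ^ (-(1/2:ℝ)))
      (volume.restrict (Set.Ioi (0:ℝ))) := by
    apply Measurable.aestronglyMeasurable
    fun_prop
  have hnn : ∀ v : ℝ, 0 ≤ Real.exp (-(Real.sqrt 3) * t * v ^ 2) * |v - β| ^ (-(1/2:ℝ)) :=
    fun v => mul_nonneg (Real.exp_pos _).le (Real.rpow_nonneg (abs_nonneg _) _)
  have hILHS : IntegrableOn
      (fun v => Real.exp (-(Real.sqrt 3) * t * v ^ 2) * |v - β| ^ (-(1/2:ℝ)))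
      (Set.Ioi (0:ℝ)) := by
    apply Integrable.mono' ((hIg1.add hIg2).integrableOn) hmeas
    filter_upwards with v
    rw [Real.norm_eq_abs, abs_of_nonneg (hnn v)]
    exact key v
  have hg1nn : ∀ v : ℝ, 0 ≤ g1 v := fun v =>
    Set.indicator_nonneg (fun x _ => Real.rpow_nonneg (abs_nonneg _) _) v
  have hg2nn : ∀ v : ℝ, 0 ≤ g2 v := fun v =>
    mul_nonneg (Real.rpow_nonneg ht0.le _) (Real.exp_pos _).le
  -- integral of g1 over ℝ
  have hintg1 : ∫ v, g1 v = 4 * t ^ (-(1/4:ℝ)) := by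
    rw [hg1def, integral_indicator measurableSet_Icc,
      MeasureTheory.integral_Icc_eq_integral_Ioc,
      ← intervalIntegral.integral_of_le (by linarith : β - δ ≤ β + δ)]
    have hc := intervalIntegral.integral_comp_sub_right (a := β - δ) (b := β + δ)
      (fun x => |x| ^ (-(1/2:ℝ))) β
    rw [show β - δ - β = -δ by ring, show β + δ - β = δ by ring] at hc
    rw [hc, int_abs_rpow δ hδpos.le, hδhalf]
  -- integral of g2 over ℝ
  have hintg2 : ∫ v, g2 v ≤ Real.sqrt π * t ^ (-(1/4:ℝ)) := by
    have e1 : ∫ v, g2 v = t ^ ((1/4:ℝ)) * Real.sqrt (π / (Real.sqrt 3 * t)) := by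
      rw [hg2def, MeasureTheory.integral_const_mul]
      congr 1
      rw [show (fun v : ℝ => Real.exp (-(Real.sqrt 3) * t * v ^ 2))
          = fun v => Real.exp (-(Real.sqrt 3 * t) * v ^ 2) by funext v; ring_nf]
      exact integral_gaussian _
    have e2 : Real.sqrt (π / (Real.sqrt 3 * t)) ≤ Real.sqrt π / Real.sqrt t := by
      rw [Real.sqrt_div Real.pi_nonneg, Real.sqrt_mul (Real.sqrt_nonneg 3) t]
      have h3 : (1:ℝ) ≤ Real.sqrt (Real.sqrt 3) := by
        rw [show (1:ℝ) = Real.sqrt (Real.sqrt 1) by simp]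
        gcongr
        norm_num
      have hst : (0:ℝ) < Real.sqrt t := Real.sqrt_pos.2 ht0
      rw [div_le_div_iff₀ (by positivity) hst]
      nlinarith [mul_le_mul_of_nonneg_left h3 (mul_nonneg (Real.sqrt_nonneg π) hst.le)]
    have e3 : Real.sqrt π / Real.sqrt t = Real.sqrt π * t ^ (-(1/2:ℝ)) := by
      rw [Real.sqrt_eq_rpow t, div_eq_mul_inv, ← Real.rpow_neg ht0.le]
    calc ∫ v, g2 v = t ^ ((1/4:ℝ)) * Real.sqrt (π / (Real.sqrt 3 * t)) := e1
      _ ≤ t ^ ((1/4:ℝ)) * (Real.sqrt π * t ^ (-(1/2:ℝ))) := by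
          rw [← e3]; gcongr
      _ = Real.sqrt π * (t ^ ((1/4:ℝ)) * t ^ (-(1/2:ℝ))) := by ring
      _ = Real.sqrt π * t ^ (-(1/4:ℝ)) := by
          rw [← Real.rpow_add ht0]; norm_num
  calc (∫ v in Set.Ioi (0 : ℝ),
          Real.exp (-(Real.sqrt 3) * t * v ^ 2) * |v - β| ^ (-(1/2:ℝ)))
      ≤ ∫ v in Set.Ioi (0:ℝ), (g1 v + g2 v) := by
        apply integral_mono hILHS ((hIg1.add hIg2).integrableOn)
        exact fun v => key v
    _ = (∫ v in Set.Ioi (0:ℝ), g1 v) + ∫ v in Set.Ioi (0:ℝ), g2 v :=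
        integral_add hIg1.integrableOn hIg2.integrableOn
    _ ≤ (∫ v, g1 v) + ∫ v, g2 v := by
        apply add_le_add
        · exact setIntegral_le_integral hIg1 (Filter.Eventually.of_forall hg1nn)
        · exact setIntegral_le_integral hIg2 (Filter.Eventually.of_forall hg2nn)
    _ ≤ 4 * t ^ (-(1/4:ℝ)) + Real.sqrt π * t ^ (-(1/4:ℝ)) := by
        rw [hintg1]; gcongr
    _ = (4 + Real.sqrt π) * t ^ (-(1/4:ℝ)) := by ring
end

section
/- Let p > 2 and q be its Hölder conjugate (1/p + 1/q = 1). There exists a constant c = c(p) > 0 such that for all t ≥ 1 and all β ∈ ℝ, ∫_0^∞ e^{−√3·t·v²}·v^{1/p − 1/2}·|v − β|^{1/q − 1} dv ≤ c·t^{−1/4}. -/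
open MeasureTheory Real Set intervalIntegral


-- sup lemma
lemma ovAuxSup {t x : ℝ} (ht : 1 ≤ t) (hx : 0 ≤ x) :
    x ^ (1/2:ℝ) * Real.exp (-(4/9 * (t * x^2))) ≤ 9/4 * t ^ (-(1/4):ℝ) := by
  have ht0 : (0:ℝ) < t := lt_of_lt_of_le one_pos ht
  have htq : (0:ℝ) < t ^ (-(1/4):ℝ) := Real.rpow_pos_of_pos ht0 _
  rcases eq_or_lt_of_le hx with rfl | hx0
  · rw [Real.zero_rpow (by norm_num), zero_mul]
    positivity
  set s : ℝ := t * x^2 with hs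
  have hs0 : 0 < s := by positivity
  have hxs : x ^ (1/2:ℝ) = s ^ (1/4:ℝ) * t ^ (-(1/4):ℝ) := by
    rw [hs, Real.mul_rpow ht0.le (sq_nonneg x)]
    rw [show (x^2 : ℝ) = x ^ (2:ℝ) by rw [Real.rpow_two],
      ← Real.rpow_mul hx0.le]
    rw [mul_comm (t ^ (1/4:ℝ)), mul_assoc, ← Real.rpow_add ht0]
    norm_num
  rcases le_or_gt s 1 with h1 | h1
  · have hA : s ^ (1/4:ℝ) ≤ 1 := Real.rpow_le_one hs0.le h1 (by norm_num)
    have hB : Real.exp (-(4/9 * s)) ≤ 1 := by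
      rw [Real.exp_le_one_iff]; nlinarith
    calc x ^ (1/2:ℝ) * Real.exp (-(4/9 * s))
        ≤ (1 * t ^ (-(1/4):ℝ)) * 1 := by
          rw [hxs]
          apply mul_le_mul _ hB (Real.exp_nonneg _) (by positivity)
          exact mul_le_mul_of_nonneg_right hA htq.le
      _ ≤ 9/4 * t ^ (-(1/4):ℝ) := by nlinarith
  · have hA : s ^ (1/4:ℝ) ≤ s := by
      calc s ^ (1/4:ℝ) ≤ s ^ (1:ℝ) :=
            Real.rpow_le_rpow_of_exponent_le h1.le (by norm_num)
        _ = s := Real.rpow_one s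
    have hB : Real.exp (-(4/9 * s)) ≤ 9/4 / s := by
      rw [Real.exp_neg]
      have h2 : (4/9 * s) ≤ Real.exp (4/9 * s) := by
        nlinarith [Real.add_one_le_exp (4/9 * s)]
      rw [inv_le_iff_one_le_mul₀ (Real.exp_pos _)]
      have : 4/9 * s * (9/4 / s) = 1 := by field_simp
      nlinarith [Real.exp_pos (4/9*s), hs0]
    calc x ^ (1/2:ℝ) * Real.exp (-(4/9 * s))
        = (s ^ (1/4:ℝ) * Real.exp (-(4/9 * s))) * t ^ (-(1/4):ℝ) := by
          rw [hxs]; ring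
      _ ≤ (s * (9/4 / s)) * t ^ (-(1/4):ℝ) := by
          apply mul_le_mul_of_nonneg_right _ htq.le
          exact mul_le_mul hA hB (Real.exp_nonneg _) hs0.le
      _ = 9/4 * t ^ (-(1/4):ℝ) := by
          field_simp


lemma ovAuxIntOn {b β : ℝ} (hb1 : -1 < b) (hβ : 0 < β) :
    IntegrableOn (fun v : ℝ => |v - β| ^ b) (Set.Ioo 0 (2*β)) := by
  have base : IntervalIntegrable (fun x : ℝ => x ^ b) volume 0 β :=
    intervalIntegrable_rpow' hb1
  have h1 : IntegrableOn (fun v : ℝ => |v - β| ^ b) (Set.Ioc 0 β) := by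
    have := (base.comp_sub_left β).symm.1
    simp only [sub_zero, sub_self] at this
    exact this.congr_fun (fun x hx => by
      rw [abs_of_nonpos (by linarith [hx.2] : x - β ≤ 0), neg_sub]) measurableSet_Ioc
  have h2 : IntegrableOn (fun v : ℝ => |v - β| ^ b) (Set.Ioc β (2*β)) := by
    have := (base.comp_sub_right β).1
    simp only [zero_add] at this
    have h2β : β + β = 2*β := by ring
    rw [h2β] at this
    exact this.congr_fun (fun x hx => by
      rw [abs_of_nonneg (by linarith [hx.1] : 0 ≤ x - β)]) measurableSet_Ioc
  exact (h1.union h2).mono_set (by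
    intro x hx
    rcases le_or_gt x β with h | h
    · exact Or.inl ⟨hx.1, h⟩
    · exact Or.inr ⟨h, hx.2.le⟩)

lemma ovAuxIntVal {b β : ℝ} (hb1 : -1 < b) (hb0 : b < 0) (hβ : 0 < β) :
    ∫ v in Set.Ioo 0 (2*β), |v - β| ^ b = 2 * (β ^ (b+1) / (b+1)) := by
  have base : IntervalIntegrable (fun x : ℝ => x ^ b) volume 0 β :=
    intervalIntegrable_rpow' hb1
  have hval : ∫ x in (0:ℝ)..β, (x:ℝ) ^ b = β ^ (b+1) / (b+1) := by
    rw [integral_rpow (Or.inl hb1), Real.zero_rpow (by linarith), sub_zero]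
  have i1 : IntervalIntegrable (fun v : ℝ => |v - β| ^ b) volume 0 β := by
    rw [intervalIntegrable_iff, uIoc_of_le hβ.le]
    have := (base.comp_sub_left β).symm.1
    simp only [sub_zero, sub_self] at this
    exact this.congr_fun (fun x hx => by
      rw [abs_of_nonpos (by linarith [hx.2] : x - β ≤ 0), neg_sub]) measurableSet_Ioc
  have i2 : IntervalIntegrable (fun v : ℝ => |v - β| ^ b) volume β (2*β) := by
    rw [intervalIntegrable_iff, uIoc_of_le (by linarith)]
    have := (base.comp_sub_right β).1
    simp only [zero_add] at this
    have h2β : β + β = 2*β := by ring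
    rw [h2β] at this
    exact this.congr_fun (fun x hx => by
      rw [abs_of_nonneg (by linarith [hx.1] : 0 ≤ x - β)]) measurableSet_Ioc
  have hsplit := integral_add_adjacent_intervals i1 i2
  have v1 : ∫ v in (0:ℝ)..β, |v - β| ^ b = β ^ (b+1) / (b+1) := by
    rw [show (∫ v in (0:ℝ)..β, |v - β| ^ b) = ∫ v in (0:ℝ)..β, (β - v) ^ b from
      integral_congr (fun x hx => by
        rw [Set.uIcc_of_le hβ.le] at hx
        rw [abs_of_nonpos (by linarith [hx.2] : x - β ≤ 0), neg_sub])]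
    rw [integral_comp_sub_left (fun x => x ^ b) β, sub_self, sub_zero, hval]
  have v2 : ∫ v in β..(2*β), |v - β| ^ b = β ^ (b+1) / (b+1) := by
    rw [show (∫ v in β..(2*β), |v - β| ^ b) = ∫ v in β..(2*β), (v - β) ^ b from
      integral_congr (fun x hx => by
        rw [Set.uIcc_of_le (by linarith)] at hx
        rw [abs_of_nonneg (by linarith [hx.1] : 0 ≤ x - β)])]
    rw [integral_comp_sub_right (fun x => x ^ b) β, sub_self]
    rw [show 2*β - β = β by ring, hval]
  rw [← MeasureTheory.integral_Ioc_eq_integral_Ioo,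
    ← intervalIntegral.integral_of_le (by linarith : (0:ℝ) ≤ 2*β), ← hsplit, v1, v2]
  ring


lemma ovAuxG1 {t : ℝ} (ht : 1 ≤ t) :
    ∫ v in Set.Ioc (0:ℝ) (t ^ (-(1/2):ℝ)), v ^ (-(1/2):ℝ) = 2 * t ^ (-(1/4):ℝ) := by
  have ht0 : (0:ℝ) < t := lt_of_lt_of_le one_pos ht
  have hr0 : (0:ℝ) ≤ t ^ (-(1/2):ℝ) := (Real.rpow_pos_of_pos ht0 _).le
  rw [← intervalIntegral.integral_of_le hr0,
    integral_rpow (Or.inl (by norm_num : (-1:ℝ) < -(1/2)))]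
  rw [Real.zero_rpow (by norm_num : (-(1/2):ℝ) + 1 ≠ 0)]
  rw [show (-(1/2):ℝ) + 1 = 1/2 by norm_num]
  rw [← Real.rpow_mul ht0.le]
  norm_num
  ring

lemma ovAuxG2 {t : ℝ} (ht : 1 ≤ t) :
    ∫ v in Set.Ioi (0:ℝ), Real.exp (-(Real.sqrt 3 * t) * v ^ 2) ≤ 2 * t ^ (-(1/2):ℝ) := by
  have ht0 : (0:ℝ) < t := lt_of_lt_of_le one_pos ht
  have h13 : (1:ℝ) ≤ Real.sqrt 3 := by
    nlinarith [Real.sq_sqrt (by norm_num : (0:ℝ) ≤ 3), Real.sqrt_nonneg 3]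
  rw [integral_gaussian_Ioi]
  have h1 : π / (Real.sqrt 3 * t) ≤ 4 / t := by
    rw [div_le_div_iff₀ (by positivity) ht0]
    nlinarith [Real.pi_le_four]
  calc Real.sqrt (π / (Real.sqrt 3 * t)) / 2
      ≤ Real.sqrt (4 / t) / 2 := by
        gcongr

    _ ≤ 2 * t ^ (-(1/2):ℝ) := by
        have hsq : ((2:ℝ) * t ^ (-(1/2):ℝ))^2 = 4 / t := by
          rw [mul_pow, show ((t ^ (-(1/2):ℝ))^2 : ℝ) = t ^ ((-(1/2):ℝ)*2) by
            rw [← Real.rpow_natCast (t ^ (-(1/2):ℝ)) 2, ← Real.rpow_mul ht0.le]; norm_num]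
          norm_num
          rw [Real.rpow_neg_one]
          ring
        rw [← hsq, Real.sqrt_sq (by positivity)]
        nlinarith [Real.rpow_pos_of_pos ht0 (-(1/2):ℝ)]
set_option maxHeartbeats 1000000 in
/-- for Hölder conjugate exponents p > 2 and q, a uniform bound
    ∫₀^∞ e^{−√3 t v²} v^{1/p−1/2}|v−β|^{1/q−1} dv ≤ c t^{−1/4}. -/
theorem ov_gaussian_hoelder_integral (p q : ℝ) (hp : 2 < p)
    (hpq : 1 / p + 1 / q = 1) :
    ∃ c : ℝ, 0 < c ∧ ∀ t : ℝ, 1 ≤ t → ∀ β : ℝ,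
      (∫ v in Set.Ioi (0 : ℝ),
          Real.exp (-(Real.sqrt 3) * t * v ^ 2) * v ^ (1 / p - 1 / 2) *
            |v - β| ^ (1 / q - 1))
        ≤ c * t ^ (-(1 / 4 : ℝ)) := by
  have hp0 : (0:ℝ) < p := by linarith
  have hip : (0:ℝ) < 1/p := by positivity
  have hip2 : 1/p < 1/2 := by
    rw [div_lt_div_iff₀ hp0 (by norm_num)]; linarith
  have hq : 1/q = 1 - 1/p := by linarith
  have hb1 : (-1:ℝ) < 1/q - 1 := by rw [hq]; linarith
  have hb0 : 1/q - 1 < 0 := by rw [hq]; linarith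
  have hα0 : 1/p - 1/2 < 0 := by linarith
  have h1p : (0:ℝ) < 1 - 1/p := by linarith
  have h13 : (1:ℝ) ≤ Real.sqrt 3 := by
    nlinarith [Real.sq_sqrt (by norm_num : (0:ℝ) ≤ 3), Real.sqrt_nonneg 3]
  refine ⟨4 * 2 ^ (1/p) + (2/3) ^ (1/p - 1/2) * (2/(1 - 1/p)) * (9/4), by positivity,
    fun t ht β => ?_⟩
  have ht0 : (0:ℝ) < t := by linarith
  have h3t : (0:ℝ) < Real.sqrt 3 * t := by positivity
  have htq : (0:ℝ) < t ^ (-(1/4):ℝ) := Real.rpow_pos_of_pos ht0 _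
  set r : ℝ := t ^ (-(1/2):ℝ) with hr
  have hr0 : 0 < r := Real.rpow_pos_of_pos ht0 _
  set K : ℝ := (2*β/3) ^ (1/p - 1/2) * Real.exp (-(Real.sqrt 3) * t * (2*β/3)^2) with hK
  set g1 : ℝ → ℝ := Set.indicator (Set.Ioc 0 r) (fun x => x ^ (-(1/2):ℝ)) with hg1
  set g2 : ℝ → ℝ := fun v => t ^ (1/4:ℝ) * Real.exp (-(Real.sqrt 3 * t) * v^2) with hg2
  set g3 : ℝ → ℝ := Set.indicator (Set.Ioo 0 (2*β)) (fun x => K * |x - β| ^ (1/q - 1))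
    with hg3
  -- nonnegativity
  have hg1nn : ∀ v, 0 ≤ g1 v := fun v =>
    Set.indicator_nonneg (fun x hx => Real.rpow_nonneg hx.1.le _) v
  have hg2nn : ∀ v, 0 ≤ g2 v := fun v => by positivity
  have hg3nn : ∀ v, 0 ≤ g3 v := fun v =>
    Set.indicator_nonneg (fun x hx => by
      have hβ0 : (0:ℝ) < β := by
        have := hx.1; have := hx.2; linarith
      have : (0:ℝ) ≤ 2*β/3 := by linarith
      positivity) v
  -- integrability
  have hint1 : Integrable g1 (volume.restrict (Set.Ioi (0:ℝ))) := by
    exact ((intervalIntegrable_rpow' (by norm_num : (-1:ℝ) < -(1/2)) (a := 0)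
      (b := r)).1.integrable_indicator measurableSet_Ioc).restrict
  have hint2 : Integrable g2 (volume.restrict (Set.Ioi (0:ℝ))) :=
    ((integrable_exp_neg_mul_sq h3t).const_mul _).restrict
  have hint3 : Integrable g3 (volume.restrict (Set.Ioi (0:ℝ))) := by
    rcases le_or_gt β 0 with hβ | hβ
    · have he : Set.Ioo (0:ℝ) (2*β) = ∅ := Set.Ioo_eq_empty (by linarith)
      have : g3 = fun _ => 0 := by rw [hg3, he]; simp
      rw [this]; exact integrable_zero _ _ _
    · exact ((IntegrableOn.integrable_indicator ((ovAuxIntOn hb1 hβ).const_mul K)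
        measurableSet_Ioo)).restrict
  -- pointwise bound
  have hfg : ∀ v ∈ Set.Ioi (0:ℝ),
      Real.exp (-(Real.sqrt 3) * t * v ^ 2) * v ^ (1/p - 1/2) * |v - β| ^ (1/q - 1)
        ≤ 2 ^ (1/p) * (g1 v + g2 v) + g3 v := by
    intro v hv
    rw [Set.mem_Ioi] at hv
    rcases le_or_gt (v/2) |v - β| with hcase | hcase
    · -- away from β
      have hstep1 : Real.exp (-(Real.sqrt 3) * t * v ^ 2) * v ^ (1/p - 1/2) *
          |v - β| ^ (1/q - 1) ≤
          2 ^ (1/p) * (Real.exp (-(Real.sqrt 3 * t) * v ^ 2) * v ^ (-(1/2):ℝ)) := by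
        have h1 : |v - β| ^ (1/q - 1) ≤ (v/2) ^ (1/q - 1) :=
          Real.rpow_le_rpow_of_nonpos (by linarith) hcase hb0.le
        have h2 : v ^ (1/p - 1/2) * (v/2) ^ (1/q - 1) =
            2 ^ (1/p) * v ^ (-(1/2):ℝ) := by
          rw [Real.div_rpow hv.le (by norm_num), ← mul_div_assoc,
            ← Real.rpow_add hv, show (1/p - 1/2) + (1/q - 1) = (-(1/2):ℝ) by
              rw [hq]; ring]
          rw [div_eq_mul_inv, ← Real.rpow_neg (by norm_num : (0:ℝ) ≤ 2),
            show -(1/q - 1) = 1/p by rw [hq]; ring]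
          ring
        calc Real.exp (-(Real.sqrt 3) * t * v ^ 2) * v ^ (1/p - 1/2) *
              |v - β| ^ (1/q - 1)
            ≤ Real.exp (-(Real.sqrt 3) * t * v ^ 2) * v ^ (1/p - 1/2) *
              (v/2) ^ (1/q - 1) := by
              apply mul_le_mul_of_nonneg_left h1
              positivity
          _ = 2 ^ (1/p) * (Real.exp (-(Real.sqrt 3 * t) * v ^ 2) * v ^ (-(1/2):ℝ)) := by
              rw [mul_assoc, h2, show (-(Real.sqrt 3) * t * v ^ 2) =
                (-(Real.sqrt 3 * t) * v ^ 2) by ring]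
              ring
      have hstep2 : Real.exp (-(Real.sqrt 3 * t) * v ^ 2) * v ^ (-(1/2):ℝ) ≤
          g1 v + g2 v := by
        rcases le_or_gt v r with hvr | hvr
        · have hmem : v ∈ Set.Ioc 0 r := ⟨hv, hvr⟩
          have : g1 v = v ^ (-(1/2):ℝ) := by
            rw [hg1, Set.indicator_of_mem hmem]
          rw [this]
          have hexp1 : Real.exp (-(Real.sqrt 3 * t) * v ^ 2) ≤ 1 := by
            rw [Real.exp_le_one_iff]
            nlinarith [sq_nonneg v, h3t.le]
          have hmul := mul_le_mul_of_nonneg_right hexp1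
            (Real.rpow_nonneg hv.le (-(1/2):ℝ))
          rw [one_mul] at hmul
          linarith [hg2nn v]
        · have hvb : v ^ (-(1/2):ℝ) ≤ r ^ (-(1/2):ℝ) :=
            Real.rpow_le_rpow_of_nonpos hr0 hvr.le (by norm_num)
          have hrt : r ^ (-(1/2):ℝ) = t ^ (1/4:ℝ) := by
            rw [hr, ← Real.rpow_mul ht0.le]; norm_num
          have : Real.exp (-(Real.sqrt 3 * t) * v ^ 2) * v ^ (-(1/2):ℝ) ≤ g2 v := by
            rw [hg2]
            calc Real.exp (-(Real.sqrt 3 * t) * v ^ 2) * v ^ (-(1/2):ℝ)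
                ≤ Real.exp (-(Real.sqrt 3 * t) * v ^ 2) * t ^ (1/4:ℝ) := by
                  apply mul_le_mul_of_nonneg_left _ (Real.exp_nonneg _)
                  rw [← hrt]; exact hvb
              _ = t ^ (1/4:ℝ) * Real.exp (-(Real.sqrt 3 * t) * v^2) := by ring
          linarith [hg1nn v, this]
      calc Real.exp (-(Real.sqrt 3) * t * v ^ 2) * v ^ (1/p - 1/2) *
            |v - β| ^ (1/q - 1)
          ≤ 2 ^ (1/p) * (Real.exp (-(Real.sqrt 3 * t) * v ^ 2) * v ^ (-(1/2):ℝ)) :=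
            hstep1
        _ ≤ 2 ^ (1/p) * (g1 v + g2 v) := by
            apply mul_le_mul_of_nonneg_left hstep2 (by positivity)
        _ ≤ 2 ^ (1/p) * (g1 v + g2 v) + g3 v := by linarith [hg3nn v]
    · -- close to β
      obtain ⟨hL, hR⟩ := abs_lt.1 hcase
      have hβv : v/2 < β := by linarith
      have hβ0 : 0 < β := by linarith
      have h23 : 0 < 2*β/3 := by linarith
      have h23v : 2*β/3 ≤ v := by linarith
      have hmem : v ∈ Set.Ioo 0 (2*β) := ⟨hv, by linarith⟩
      have hg3v : g3 v = K * |v - β| ^ (1/q - 1) := by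
        rw [hg3, Set.indicator_of_mem hmem]
      have hkey : Real.exp (-(Real.sqrt 3) * t * v ^ 2) * v ^ (1/p - 1/2) ≤ K := by
        rw [hK, mul_comm ((2*β/3) ^ (1/p - 1/2))
          (Real.exp (-(Real.sqrt 3) * t * (2*β/3)^2))]
        have hsq : (2*β/3)^2 ≤ v^2 := by nlinarith
        have hexp : Real.exp (-(Real.sqrt 3) * t * v ^ 2) ≤
            Real.exp (-(Real.sqrt 3) * t * (2*β/3) ^ 2) := by
          rw [Real.exp_le_exp]
          nlinarith [mul_nonneg (Real.sqrt_nonneg 3) ht0.le]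
        have hpow : v ^ (1/p - 1/2) ≤ (2*β/3) ^ (1/p - 1/2) :=
          Real.rpow_le_rpow_of_nonpos h23 h23v hα0.le
        exact mul_le_mul hexp hpow (Real.rpow_nonneg hv.le _) (Real.exp_nonneg _)
      calc Real.exp (-(Real.sqrt 3) * t * v ^ 2) * v ^ (1/p - 1/2) *
            |v - β| ^ (1/q - 1)
          ≤ K * |v - β| ^ (1/q - 1) :=
            mul_le_mul_of_nonneg_right hkey (Real.rpow_nonneg (abs_nonneg _) _)
        _ = g3 v := hg3v.symm
        _ ≤ 2 ^ (1/p) * (g1 v + g2 v) + g3 v := by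
            have hnn : (0:ℝ) ≤ 2 ^ (1/p) * (g1 v + g2 v) :=
              mul_nonneg (by positivity) (add_nonneg (hg1nn v) (hg2nn v))
            linarith
  -- integrate the bound
  have hmono : (∫ v in Set.Ioi (0 : ℝ),
      Real.exp (-(Real.sqrt 3) * t * v ^ 2) * v ^ (1/p - 1/2) * |v - β| ^ (1/q - 1))
      ≤ ∫ v in Set.Ioi (0:ℝ), (2 ^ (1/p) * (g1 v + g2 v) + g3 v) := by
    apply integral_mono_of_nonneg
    · refine (ae_restrict_iff' measurableSet_Ioi).2 (Filter.Eventually.of_forall ?_)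
      intro v hv
      rw [Set.mem_Ioi] at hv
      have : (0:ℝ) ≤ v := hv.le
      positivity
    · exact ((hint1.add hint2).const_mul _).add hint3
    · exact (ae_restrict_iff' measurableSet_Ioi).2 (Filter.Eventually.of_forall hfg)
  -- compute/estimate the RHS
  have hB1 : (∫ v in Set.Ioi (0:ℝ), g1 v) = 2 * t ^ (-(1/4):ℝ) := by
    rw [hg1, MeasureTheory.integral_indicator measurableSet_Ioc]
    rw [show ∫ v in Set.Ioc 0 r, (fun x : ℝ => x ^ (-(1/2):ℝ)) v
          ∂(volume.restrict (Set.Ioi (0:ℝ)))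
        = ∫ v in Set.Ioc 0 r, v ^ (-(1/2):ℝ) by
      rw [Measure.restrict_restrict measurableSet_Ioc,
        Set.inter_eq_left.2 Set.Ioc_subset_Ioi_self]]
    exact ovAuxG1 ht
  have hB2 : (∫ v in Set.Ioi (0:ℝ), g2 v) ≤ 2 * t ^ (-(1/4):ℝ) := by
    rw [hg2, MeasureTheory.integral_const_mul]
    calc t ^ (1/4:ℝ) * ∫ v in Set.Ioi (0:ℝ), Real.exp (-(Real.sqrt 3 * t) * v^2)
        ≤ t ^ (1/4:ℝ) * (2 * t ^ (-(1/2):ℝ)) := by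
          apply mul_le_mul_of_nonneg_left (ovAuxG2 ht) (Real.rpow_nonneg ht0.le _)
      _ = 2 * t ^ (-(1/4):ℝ) := by
          rw [mul_comm, mul_assoc, ← Real.rpow_add ht0]
          norm_num
  have hB3 : (∫ v in Set.Ioi (0:ℝ), g3 v) ≤
      (2/3) ^ (1/p - 1/2) * (2/(1 - 1/p)) * (9/4) * t ^ (-(1/4):ℝ) := by
    rcases le_or_gt β 0 with hβ | hβ
    · have he : Set.Ioo (0:ℝ) (2*β) = ∅ := Set.Ioo_eq_empty (by linarith)
      have hz : g3 = fun _ => 0 := by rw [hg3, he]; simp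
      rw [hz]
      simp only [MeasureTheory.integral_zero]
      positivity
    · rw [hg3, MeasureTheory.integral_indicator measurableSet_Ioo]
      rw [show ∫ v in Set.Ioo 0 (2*β), (fun x : ℝ => K * |x - β| ^ (1/q - 1)) v
            ∂(volume.restrict (Set.Ioi (0:ℝ)))
          = ∫ v in Set.Ioo 0 (2*β), K * |v - β| ^ (1/q - 1) by
        rw [Measure.restrict_restrict measurableSet_Ioo,
          Set.inter_eq_left.2 Set.Ioo_subset_Ioi_self]]
      rw [MeasureTheory.integral_const_mul, ovAuxIntVal hb1 hb0 hβ]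
      rw [show (1/q - 1) + 1 = 1 - 1/p by rw [hq]; ring]
      -- now: K * (2 * (β ^ (1 - 1/p) / (1 - 1/p))) ≤ ...
      have hsplit : ((2*β/3 : ℝ)) ^ (1/p - 1/2) = (2/3:ℝ) ^ (1/p - 1/2) * β ^ (1/p - 1/2) := by
        rw [show (2*β/3:ℝ) = (2/3)*β by ring, Real.mul_rpow (by norm_num) hβ.le]
      have hb_pow : β ^ (1/p - 1/2) * β ^ (1 - 1/p) = β ^ (1/2:ℝ) := by
        rw [← Real.rpow_add hβ, show (1/p - 1/2) + (1 - 1/p) = (1/2:ℝ) by ring]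
      have hE : Real.exp (-(Real.sqrt 3) * t * (2*β/3)^2) ≤
          Real.exp (-(4/9 * (t * β^2))) := by
        rw [Real.exp_le_exp]
        nlinarith [mul_nonneg (mul_nonneg (sub_nonneg.2 h13) ht0.le) (sq_nonneg β)]
      have hsup : β ^ (1/2:ℝ) * Real.exp (-(4/9 * (t * β^2))) ≤ 9/4 * t ^ (-(1/4):ℝ) :=
        ovAuxSup ht hβ.le
      have hnn1 : (0:ℝ) ≤ (2/3:ℝ) ^ (1/p - 1/2) * (2/(1 - 1/p)) := by positivity
      calc K * (2 * (β ^ (1 - 1/p) / (1 - 1/p)))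
          = (2/3:ℝ) ^ (1/p - 1/2) * (2/(1 - 1/p)) *
            (β ^ (1/2:ℝ) * Real.exp (-(Real.sqrt 3) * t * (2*β/3)^2)) := by
            rw [hK, hsplit, ← hb_pow]; ring
        _ ≤ (2/3:ℝ) ^ (1/p - 1/2) * (2/(1 - 1/p)) *
            (β ^ (1/2:ℝ) * Real.exp (-(4/9 * (t * β^2)))) := by
            apply mul_le_mul_of_nonneg_left _ hnn1
            exact mul_le_mul_of_nonneg_left hE (Real.rpow_nonneg hβ.le _)
        _ ≤ (2/3:ℝ) ^ (1/p - 1/2) * (2/(1 - 1/p)) * (9/4 * t ^ (-(1/4):ℝ)) :=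
            mul_le_mul_of_nonneg_left hsup hnn1
        _ = (2/3) ^ (1/p - 1/2) * (2/(1 - 1/p)) * (9/4) * t ^ (-(1/4):ℝ) := by ring
  -- combine
  have hsum : (∫ v in Set.Ioi (0:ℝ), (2 ^ (1/p) * (g1 v + g2 v) + g3 v))
      = 2 ^ (1/p) * ((∫ v in Set.Ioi (0:ℝ), g1 v) + ∫ v in Set.Ioi (0:ℝ), g2 v)
        + ∫ v in Set.Ioi (0:ℝ), g3 v := by
    have h12 : Integrable (fun v => 2 ^ (1/p) * (g1 v + g2 v))
        (volume.restrict (Set.Ioi (0:ℝ))) := (hint1.add hint2).const_mul _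
    calc ∫ v in Set.Ioi (0:ℝ), (2 ^ (1/p) * (g1 v + g2 v) + g3 v)
        = (∫ v in Set.Ioi (0:ℝ), 2 ^ (1/p) * (g1 v + g2 v))
          + ∫ v in Set.Ioi (0:ℝ), g3 v := MeasureTheory.integral_add h12 hint3
      _ = 2 ^ (1/p) * ((∫ v in Set.Ioi (0:ℝ), g1 v) + ∫ v in Set.Ioi (0:ℝ), g2 v)
          + ∫ v in Set.Ioi (0:ℝ), g3 v := by
          rw [MeasureTheory.integral_const_mul, MeasureTheory.integral_add hint1 hint2]
  calc (∫ v in Set.Ioi (0 : ℝ),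
        Real.exp (-(Real.sqrt 3) * t * v ^ 2) * v ^ (1/p - 1/2) * |v - β| ^ (1/q - 1))
      ≤ ∫ v in Set.Ioi (0:ℝ), (2 ^ (1/p) * (g1 v + g2 v) + g3 v) := hmono
    _ = 2 ^ (1/p) * ((∫ v in Set.Ioi (0:ℝ), g1 v) + ∫ v in Set.Ioi (0:ℝ), g2 v)
        + ∫ v in Set.Ioi (0:ℝ), g3 v := hsum
    _ ≤ 2 ^ (1/p) * (2 * t ^ (-(1/4):ℝ) + 2 * t ^ (-(1/4):ℝ))
        + (2/3) ^ (1/p - 1/2) * (2/(1 - 1/p)) * (9/4) * t ^ (-(1/4):ℝ) := by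
        have h2p : (0:ℝ) ≤ 2 ^ (1/p) := by positivity
        apply add_le_add _ hB3
        apply mul_le_mul_of_nonneg_left _ h2p
        rw [hB1]
        exact add_le_add_right hB2 _
    _ = (4 * 2 ^ (1/p) + (2/3) ^ (1/p - 1/2) * (2/(1 - 1/p)) * (9/4)) *
        t ^ (-(1/4):ℝ) := by ring
end
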